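/- Let ABCD be a square. Let E, F, G, H be the first Brocard points of triangles BCD, CDA, DAB, ABC respectively. Then the area of ABCD equals 5 times the area of EFGH. -/

import Mathlib

/-- Shoelace area of a quadrilateral PQRS in the plane. -/
noncomputable def quadArea (P Q R S : EuclideanSpace ℝ (Fin 2)) : ℝ :=
  |P 0 * (Q 1 - S 1) + Q 0 * (R 1 - P 1) + R 0 * (S 1 - Q 1) + S 0 * (P 1 - R 1)| / 2

/-- The first Brocard point of triangle `PQR`, with barycentric coordinates
`(a²c² : b²a² : c²b²)` where `a = QR`, `b = RP`, `c = PQ`. -/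
noncomputable def brocardPoint (P Q R : EuclideanSpace ℝ (Fin 2)) : EuclideanSpace ℝ (Fin 2) :=
  let a := dist Q R
  let b := dist R P
  let c := dist P Q
  (a^2 * c^2 + b^2 * a^2 + c^2 * b^2)⁻¹ •
    ((a^2 * c^2) • P + (b^2 * a^2) • Q + (c^2 * b^2) • R)

lemma dist_sq' (X Y : EuclideanSpace ℝ (Fin 2)) :
    dist X Y ^ 2 = (X 0 - Y 0)^2 + (X 1 - Y 1)^2 := by
  rw [EuclideanSpace.dist_eq, Real.sq_sqrt (by positivity), Fin.sum_univ_two,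
    Real.dist_eq, Real.dist_eq, sq_abs, sq_abs]

lemma brocard_apply (P Q R : EuclideanSpace ℝ (Fin 2)) (i : Fin 2) :
    brocardPoint P Q R i =
      (dist Q R^2 * dist P Q^2 + dist R P^2 * dist Q R^2 + dist P Q^2 * dist R P^2)⁻¹ *
        ((dist Q R^2 * dist P Q^2) * P i + (dist R P^2 * dist Q R^2) * Q i
          + (dist P Q^2 * dist R P^2) * R i) := by
  simp [brocardPoint, PiLp.smul_apply, PiLp.add_apply, smul_eq_mul]
  ring

theorem square_brocard_central_quadrilateral_area
    (A B C D : EuclideanSpace ℝ (Fin 2))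
    (hAB : A ≠ B)
    (hperp : (inner ℝ (B - A) (C - B) : ℝ) = 0)
    (hlen : dist A B = dist B C)
    (hD : D = A + (C - B)) :
    quadArea A B C D =
      5 * quadArea (brocardPoint B C D) (brocardPoint C D A)
        (brocardPoint D A B) (brocardPoint A B C) := by
  have hD0 : D 0 = A 0 + (C 0 - B 0) := by rw [hD]; rfl
  have hD1 : D 1 = A 1 + (C 1 - B 1) := by rw [hD]; rfl
  have hperp' : (B 0 - A 0) * (C 0 - B 0) + (B 1 - A 1) * (C 1 - B 1) = 0 := by
    have h := hperp
    simp [PiLp.inner_apply, RCLike.inner_apply, Fin.sum_univ_two, PiLp.sub_apply] at h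
    linarith
  have hlen' : (A 0 - B 0)^2 + (A 1 - B 1)^2 = (B 0 - C 0)^2 + (B 1 - C 1)^2 := by
    have := congrArg (· ^ 2) hlen
    simpa [dist_sq'] using this
  obtain ⟨L, hLc, hLpos⟩ : ∃ L : ℝ, L = (B 0 - A 0)^2 + (B 1 - A 1)^2 ∧ 0 < L := by
    refine ⟨_, rfl, ?_⟩
    have h0 : dist A B ≠ 0 := dist_ne_zero.2 hAB
    have h1 : (0:ℝ) < dist A B ^ 2 := by positivity
    rw [dist_sq'] at h1
    linarith [sq_nonneg (A 0 - B 0), sq_nonneg (A 1 - B 1),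
      sq_abs (A 0 - B 0), sq_abs (A 1 - B 1), sq_nonneg (B 0 - A 0)]
  have hLne : L ≠ 0 := ne_of_gt hLpos
  have dCD : dist C D ^ 2 = L := by rw [dist_sq', hD0, hD1, hLc]; ring
  have dBC : dist B C ^ 2 = L := by rw [dist_sq', hLc]; linear_combination -hlen'
  have dDB : dist D B ^ 2 = 2 * L := by
    rw [dist_sq', hD0, hD1, hLc]; linear_combination -hlen' - 2 * hperp'
  have dDA : dist D A ^ 2 = L := by rw [dist_sq', hD0, hD1, hLc]; linear_combination -hlen'
  have dAC : dist A C ^ 2 = 2 * L := by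
    rw [dist_sq', hLc]; linear_combination -hlen' + 2 * hperp'
  have dAB : dist A B ^ 2 = L := by rw [dist_sq', hLc]; ring
  have dBD : dist B D ^ 2 = 2 * L := by rw [dist_comm]; exact dDB
  have dCA : dist C A ^ 2 = 2 * L := by rw [dist_comm]; exact dAC
  have hE : ∀ i, brocardPoint B C D i = (B i + 2 * C i + 2 * D i) / 5 := by
    intro i; rw [brocard_apply, dCD, dDB, dBC]; field_simp; ring
  have hF : ∀ i, brocardPoint C D A i = (C i + 2 * D i + 2 * A i) / 5 := by
    intro i; rw [brocard_apply, dDA, dAC, dCD]; field_simp; ring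
  have hG : ∀ i, brocardPoint D A B i = (D i + 2 * A i + 2 * B i) / 5 := by
    intro i; rw [brocard_apply, dAB, dBD, dDA]; field_simp; ring
  have hH : ∀ i, brocardPoint A B C i = (A i + 2 * B i + 2 * C i) / 5 := by
    intro i; rw [brocard_apply, dBC, dCA, dAB]; field_simp; ring
  unfold quadArea
  rw [hE, hE, hF, hF, hG, hG, hH, hH]
  rw [show ((B 0 + 2*C 0 + 2*D 0)/5 * ((C 1 + 2*D 1 + 2*A 1)/5 - (A 1 + 2*B 1 + 2*C 1)/5)
      + (C 0 + 2*D 0 + 2*A 0)/5 * ((D 1 + 2*A 1 + 2*B 1)/5 - (B 1 + 2*C 1 + 2*D 1)/5)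
      + (D 0 + 2*A 0 + 2*B 0)/5 * ((A 1 + 2*B 1 + 2*C 1)/5 - (C 1 + 2*D 1 + 2*A 1)/5)
      + (A 0 + 2*B 0 + 2*C 0)/5 * ((B 1 + 2*C 1 + 2*D 1)/5 - (D 1 + 2*A 1 + 2*B 1)/5))
      = (A 0 * (B 1 - D 1) + B 0 * (C 1 - A 1) + C 0 * (D 1 - B 1) + D 0 * (A 1 - C 1)) / 5
      from by ring,
    abs_div]
  rw [show |(5:ℝ)| = 5 from by norm_num]
  ring
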